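/- Consider a dipole with n parallel edges partitioned into color classes, where class i contains m_i halvable edges. The number of ways to choose, for each color class independently, a set of edges to project to half-edges such that the remaining edges in each class pair up into loops (i.e., the remaining count in each class is even), summed over all classes, is at most 2^(n/2) distinct resulting multisets of (number of half-edges, number of loops) per color class; in particular, the number of pairwise non-isomorphic half-quotients of a dipole with n edges is at most 2^(⌈n/2⌉). -/

import Mathlib

/-- A half-quotient of a dipole whose color classes have sizes `m i` is determined by the
number `h i` of half-edges in each class, where `h i ≤ m i` and `h i` has the same parity
as `m i` (the remaining `m i - h i` edges pair up into loops). -/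
theorem stmt_8 (c n : ℕ) (m : Fin c → ℕ) (hm : ∀ i, 1 ≤ m i)
    (hsum : ∑ i, m i = n) :
    Set.ncard {h : Fin c → ℕ | ∀ i, h i ≤ m i ∧ h i % 2 = m i % 2} ≤
      2 ^ ((n + 1) / 2) := by
  set S := {h : Fin c → ℕ | ∀ i, h i ≤ m i ∧ h i % 2 = m i % 2}
  set f : (Fin c → ℕ) → (∀ i, Fin (m i / 2 + 1)) :=
    fun h i => ⟨min (h i / 2) (m i / 2), by omega⟩
  have hinj : Set.InjOn f S := by
    intro a ha b hb hab
    funext i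
    have h1 := (ha i).1; have h2 := (ha i).2
    have h3 := (hb i).1; have h4 := (hb i).2
    have := congrFun hab i
    have heq : min (a i / 2) (m i / 2) = min (b i / 2) (m i / 2) :=
      congrArg Fin.val this
    have ha' : a i / 2 ≤ m i / 2 := Nat.div_le_div_right h1
    have hb' : b i / 2 ≤ m i / 2 := Nat.div_le_div_right h3
    rw [min_eq_left ha', min_eq_left hb'] at heq
    omega
  have h1 : S.ncard ≤ (Set.univ : Set (∀ i, Fin (m i / 2 + 1))).ncard := by
    apply Set.ncard_le_ncard_of_injOn f (fun a _ => Set.mem_univ _) hinj Set.finite_univ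
  have h2 : (Set.univ : Set (∀ i, Fin (m i / 2 + 1))).ncard = ∏ i, (m i / 2 + 1) := by
    rw [Set.ncard_univ, Nat.card_eq_fintype_card]
    simp [Fintype.card_pi]
  have h3 : ∏ i, (m i / 2 + 1) ≤ ∏ i, 2 ^ (m i / 2) := by
    apply Finset.prod_le_prod
    · intro i _; positivity
    · intro i _; exact Nat.succ_le_of_lt Nat.lt_two_pow_self
  have h4 : ∏ i, 2 ^ (m i / 2) = 2 ^ (∑ i, m i / 2) := by
    rw [Finset.prod_pow_eq_pow_sum]
  have h5 : ∑ i, m i / 2 ≤ (n + 1) / 2 := by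
    apply Nat.le_div_iff_mul_le (by norm_num) |>.mpr
    calc (∑ i, m i / 2) * 2 = ∑ i, (m i / 2 * 2) := by rw [Finset.sum_mul]
    _ ≤ ∑ i, m i := Finset.sum_le_sum fun i _ => Nat.div_mul_le_self _ _
    _ ≤ n + 1 := by omega
  calc S.ncard ≤ ∏ i, (m i / 2 + 1) := h1.trans_eq h2
  _ ≤ 2 ^ (∑ i, m i / 2) := h3.trans_eq h4
  _ ≤ 2 ^ ((n + 1) / 2) := Nat.pow_le_pow_right (by norm_num) h5
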